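/- The group F × ℤ, where F is a finitely generated free group of rank ≥ 2, fails the finitely generated intersection property: there exist finitely generated subgroups H and K of F × ℤ such that H ∩ K is not finitely generated. -/

import Mathlib

open Finsupp Multiplicative SemidirectProduct

noncomputable section FGIPAux

/-- The Laurent-coefficient group. -/
abbrev FGIP.R := ℤ →₀ ℤ

namespace FGIP

/-- conversion `AddAut R →* MulAut (Multiplicative R)`. -/
def conv : Multiplicative (AddAut R) →* MulAut (Multiplicative R) where
  toFun e := AddEquiv.toMultiplicative e.toAdd
  map_one' := by ext x; rfl
  map_mul' e₁ e₂ := by ext x; rfl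

def shiftHom : Multiplicative ℤ →* Multiplicative (AddAut R) where
  toFun n := ofAdd (Finsupp.domCongr (Equiv.addRight (n.toAdd)) : R ≃+ R)
  map_one' := by
    ext f m
    simp [Finsupp.domCongr_apply]
    rfl
  map_mul' a b := by
    ext f m
    simp only [Finsupp.domCongr_apply, Finsupp.equivMapDomain_apply, toAdd_mul, toAdd_ofAdd, AddAut.add_apply,
      Equiv.Perm.mul_def, Equiv.symm_trans_apply, Equiv.addRight_symm, Equiv.coe_addRight]
    congr 1
    omega

abbrev act : Multiplicative ℤ →* MulAut (Multiplicative R) := conv.comp shiftHom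

abbrev L := Multiplicative R ⋊[act] Multiplicative ℤ

lemma act_single (n : ℤ) (m : ℤ) :
    act (ofAdd n) (ofAdd (Finsupp.single m 1)) = ofAdd (Finsupp.single (m + n) 1) := by
  show ofAdd ((Finsupp.domCongr (Equiv.addRight n) : R ≃+ R) (Finsupp.single m 1)) = _
  rw [Finsupp.domCongr_apply, Finsupp.equivMapDomain_single]
  rfl

variable (r : ℕ)

def Phi : FreeGroup (Fin r) →* L :=
  FreeGroup.lift fun i =>
    if i.val = 0 then .inr (ofAdd 1) else .inl (ofAdd (Finsupp.single 0 1))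

def phi : FreeGroup (Fin r) →* Multiplicative ℤ := rightHom.comp (Phi r)

end FGIP

end FGIPAux

open FGIP

/-- `F × ℤ` with `F` free of rank `≥ 2` fails the FGIP. -/
theorem stmt_10 {r : ℕ} (hr : 2 ≤ r) :
    ∃ H K : Subgroup (FreeGroup (Fin r) × Multiplicative ℤ),
      H.FG ∧ K.FG ∧ ¬ (H ⊓ K).FG := by
  classical
  set F := FreeGroup (Fin r) with hF
  haveI : Group.FG F :=
    Group.fg_iff.mpr ⟨Set.range FreeGroup.of, FreeGroup.closure_range_of _, Set.finite_range _⟩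
  set ψ : F →* F × Multiplicative ℤ := (MonoidHom.id F).prod (phi r) with hψ
  refine ⟨(MonoidHom.inl F (Multiplicative ℤ)).range, ψ.range,
    (Group.fg_iff_subgroup_fg _).mp (Group.fg_range _),
    (Group.fg_iff_subgroup_fg _).mp (Group.fg_range _), ?_⟩
  intro hFG
  set P := (MonoidHom.inl F (Multiplicative ℤ)).range ⊓ ψ.range with hP
  have hmem : ∀ x ∈ P, x.2 = 1 ∧ phi r x.1 = 1 := by
    rintro ⟨g, z⟩ ⟨⟨g', hg'⟩, ⟨g'', hg''⟩⟩
    have h1 : z = 1 := by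
      have := congrArg Prod.snd hg'; simpa using this.symm
    have h2 : phi r g = z := by
      have hfst := congrArg Prod.fst hg''
      have hsnd := congrArg Prod.snd hg''
      simp only [hψ, MonoidHom.prod_apply, MonoidHom.id_apply] at hfst hsnd
      rw [← hfst]; exact hsnd
    exact ⟨h1, h2.trans h1⟩
  have hright : ∀ g : F, (Phi r g).right = phi r g := fun g => rfl
  -- the homomorphism from P to Multiplicative R
  set θ : P →* Multiplicative R :=
    { toFun := fun x => (Phi r x.1.1).left
      map_one' := by
        show (Phi r (1 : F)).left = 1
        rw [map_one]; rfl
      map_mul' := by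
        rintro x y
        show (Phi r (x.1.1 * y.1.1)).left = (Phi r x.1.1).left * (Phi r y.1.1).left
        rw [map_mul, mul_left]
        have h1 : (Phi r x.1.1).right = 1 := by
          rw [hright]; exact (hmem x.1 x.2).2
        rw [h1, map_one]
        rfl } with hθ
  haveI : Group.FG P := (Group.fg_iff_subgroup_fg P).mpr hFG
  obtain ⟨S, hS⟩ := (Group.fg_iff_subgroup_fg θ.range).mp (Group.fg_range θ)
  -- every "single n 1" is in the range of θ
  have hclaim : ∀ n : ℤ, ofAdd (Finsupp.single n 1) ∈ θ.range := by
    intro n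
    set a : F := FreeGroup.of (⟨0, by omega⟩ : Fin r) with ha
    set b : F := FreeGroup.of (⟨1, by omega⟩ : Fin r) with hb
    set w : F := a ^ n * b * a ^ (-n) with hw
    have hΦa : Phi r a = .inr (ofAdd 1) := by
      rw [ha, Phi, FreeGroup.lift_apply_of]; simp
    have hΦb : Phi r b = .inl (ofAdd (Finsupp.single 0 1)) := by
      rw [hb, Phi, FreeGroup.lift_apply_of]; simp
    have ht : (ofAdd (1 : ℤ)) ^ n = ofAdd n := by
      rw [← ofAdd_zsmul]; norm_num
    have hΦw : Phi r w = .inl (ofAdd (Finsupp.single n 1)) := by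
      rw [hw, map_mul, map_mul, map_zpow, map_zpow, hΦa, hΦb,
        ← map_zpow (SemidirectProduct.inr (φ := act)), ← map_zpow (SemidirectProduct.inr (φ := act)),
        ht, zpow_neg, ht, ← inl_aut, act_single, zero_add]
    have hφw : phi r w = 1 := by
      show rightHom (Phi r w) = 1
      rw [hΦw, rightHom_inl]
    have hPw : ((w, 1) : F × Multiplicative ℤ) ∈ P :=
      ⟨⟨w, rfl⟩, ⟨w, by simp [hψ, hφw]⟩⟩
    refine ⟨⟨(w, 1), hPw⟩, ?_⟩
    show (Phi r w).left = _
    rw [hΦw, left_inl]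
  -- the contradiction: a f.g. subgroup of Multiplicative R has bounded support
  set Supp : Finset ℤ := S.sup fun x => (Multiplicative.toAdd x).support with hSupp
  set V : Subgroup (Multiplicative R) :=
    { carrier := {x : Multiplicative R | ∀ m ∉ Supp, (Multiplicative.toAdd x) m = 0}
      one_mem' := fun m _ => rfl
      mul_mem' := by
        intro a b ha hb m hm
        show (a.toAdd + b.toAdd) m = 0
        rw [Finsupp.add_apply, ha m hm, hb m hm, add_zero]
      inv_mem' := by
        intro a ha m hm
        show (-a.toAdd) m = 0
        rw [Finsupp.neg_apply, ha m hm, neg_zero] } with hV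
  have hle : θ.range ≤ V := by
    rw [← hS, Subgroup.closure_le]
    intro x hx m hm
    have hsub : (Multiplicative.toAdd x).support ⊆ Supp :=
      Finset.le_sup (f := fun x => (Multiplicative.toAdd x).support) hx
    exact Finsupp.notMem_support_iff.mp fun hc => hm (hsub hc)
  obtain ⟨m, hm⟩ := Infinite.exists_notMem_finset Supp
  have := hle (hclaim m) m hm
  rw [toAdd_ofAdd, Finsupp.single_eq_same] at this
  exact one_ne_zero this
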